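/- (Tate) In the setting of Tate's isomorphism t : Hom_A(C, A) ≅ C, let λ = t^{−1}(1) be the canonical trace (a free C-module generator of Hom_A(C, A)) and let m : C ⊗_A C → C be the multiplication map. Then the canonical trace map tr_{C/A} : C → A (trace of multiplication on the finite free A-module C) satisfies tr_{C/A}(c) = λ(m(Δ̄)·c) for all c ∈ C. -/
import Mathlib


open scoped TensorProduct

section TateAux

variable (A : Type*) [CommRing A] (C : Type*) [CommRing C] [Algebra A C]

/-- Auxiliary map for Tate's trace formula: `x ⊗ y ↦ (z ↦ lam (y * z) • x)`. -/
noncomputable def tatePhi (lam : C →ₗ[A] A) : C ⊗[A] C →ₗ[A] (C →ₗ[A] C) :=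
  TensorProduct.lift (LinearMap.mk₂ A
    (fun x y => LinearMap.smulRight (lam ∘ₗ LinearMap.mul A C y) x)
    (fun x x' y => by
      ext z
      simp only [LinearMap.smulRight_apply, LinearMap.add_apply]
      rw [smul_add])
    (fun a x y => by
      ext z
      simp only [LinearMap.smulRight_apply, LinearMap.smul_apply]
      rw [smul_comm])
    (fun x y y' => by
      ext z
      simp only [LinearMap.smulRight_apply, LinearMap.add_apply, LinearMap.coe_comp,
        Function.comp_apply, LinearMap.mul_apply', add_mul, map_add, add_smul])
    (fun a x y => by
      ext z
      simp only [LinearMap.smulRight_apply, LinearMap.smul_apply, LinearMap.coe_comp,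
        Function.comp_apply, LinearMap.mul_apply', smul_mul_assoc, map_smul,
        smul_eq_mul, mul_smul]))

@[simp] lemma tatePhi_tmul (lam : C →ₗ[A] A) (x y z : C) :
    tatePhi A C lam (x ⊗ₜ[A] y) z = lam (y * z) • x := by
  simp [tatePhi]

end TateAux

set_option maxHeartbeats 8000000

/-- **Tate's trace formula.**
In the setting of Tate's isomorphism `t : Hom_A(C, A) ≅ C`, let `λ = t⁻¹(1)`
be the canonical trace and `m : C ⊗_A C → C` the multiplication map.  Then the
canonical trace map `tr_{C/A} : C → A` satisfies
`tr_{C/A}(c) = λ(m(Δ̄)·c)` for all `c ∈ C`. -/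
theorem tate_trace_formula
    (A : Type*) [CommRing A] (B : Type*) [CommRing B] [Algebra A B]
    (n : ℕ) (f : Fin n → B)
    (hf : RingTheory.Sequence.IsRegular B (List.ofFn f))
    (I : Ideal B) (hI : I = Ideal.span (Set.range f))
    [Module.Finite A (B ⧸ I)] [Module.Free A (B ⧸ I)]
    (s : B ⊗[A] (B ⧸ I) →ₐ[A] (B ⧸ I))
    (hs : ∀ (b : B) (c : B ⧸ I), s (b ⊗ₜ c) = Ideal.Quotient.mk I b * c)
    (g : Fin n → B ⊗[A] (B ⧸ I))
    (hg : RingTheory.Sequence.IsRegular (B ⊗[A] (B ⧸ I)) (List.ofFn g))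
    (hJ : RingHom.ker s = Ideal.span (Set.range g))
    (h : Matrix (Fin n) (Fin n) (B ⊗[A] (B ⧸ I)))
    (hh : ∀ i, (f i) ⊗ₜ[A] (1 : B ⧸ I) = ∑ j, h i j * g j)
    (Δbar : (B ⧸ I) ⊗[A] (B ⧸ I))
    (hΔbar : Δbar =
      (Algebra.TensorProduct.map (Ideal.Quotient.mkₐ A I) (AlgHom.id A (B ⧸ I))) h.det)
    (T : ((B ⧸ I) →ₗ[A] A) → (B ⧸ I))
    (hT : ∀ φ : (B ⧸ I) →ₗ[A] A,
      T φ = TensorProduct.lift (((LinearMap.lsmul A (B ⧸ I)).comp φ).flip) Δbar)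
    -- `λ = t⁻¹(1)`
    (lam : (B ⧸ I) →ₗ[A] A) (hlam : T lam = 1) (c : B ⧸ I) :
    LinearMap.trace A (B ⧸ I) (LinearMap.mul A (B ⧸ I) c) =
      lam (LinearMap.mul' A (B ⧸ I) Δbar * c) := by
  classical
  set πbar : B ⊗[A] (B ⧸ I) →ₐ[A] (B ⧸ I) ⊗[A] (B ⧸ I) :=
    Algebra.TensorProduct.map (Ideal.Quotient.mkₐ A I) (AlgHom.id A (B ⧸ I)) with hπbar
  set F : Fin n → B ⊗[A] (B ⧸ I) := fun i => (f i) ⊗ₜ[A] (1 : B ⧸ I) with hFdef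
  -- Cramer: h.det * g k ∈ span (range F)
  have hcramer : ∀ k, h.det * g k ∈ Ideal.span (Set.range F) := by
    intro k
    have hFv : F = h.mulVec g := by
      funext i
      simp [hFdef, Matrix.mulVec, dotProduct, hh i]
    have hdg : h.det • g = h.adjugate.mulVec F := by
      rw [hFv, Matrix.mulVec_mulVec, Matrix.adjugate_mul]
      funext i
      simp [Matrix.mulVec, dotProduct, Matrix.smul_apply, Matrix.one_apply,
        ite_mul, Finset.mul_sum, mul_assoc]
    have hk : h.det * g k = ∑ j, h.adjugate k j * F j := by
      have := congrFun hdg k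
      simpa [Matrix.mulVec, dotProduct, smul_eq_mul] using this
    rw [hk]
    exact Ideal.sum_mem _ fun j _ =>
      Ideal.mul_mem_left _ _ (Ideal.subset_span ⟨j, rfl⟩)
  -- span (range F) ⊆ ker πbar
  have hFker : Ideal.span (Set.range F) ≤
      RingHom.ker (πbar : B ⊗[A] (B ⧸ I) →+* (B ⧸ I) ⊗[A] (B ⧸ I)) := by
    rw [Ideal.span_le]
    rintro _ ⟨j, rfl⟩
    have hfj : Ideal.Quotient.mk I (f j) = 0 := by
      rw [Ideal.Quotient.eq_zero_iff_mem, hI]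
      exact Ideal.subset_span ⟨j, rfl⟩
    simp [RingHom.mem_ker, hπbar, hFdef, Ideal.Quotient.mkₐ_eq_mk, hfj]
  -- symmetry of Δbar
  have key : ∀ d : B ⧸ I,
      (d ⊗ₜ[A] (1 : B ⧸ I)) * Δbar = ((1 : B ⧸ I) ⊗ₜ[A] d) * Δbar := by
    intro d
    obtain ⟨b, rfl⟩ := Ideal.Quotient.mk_surjective d
    set u : B ⊗[A] (B ⧸ I) :=
      b ⊗ₜ[A] (1 : B ⧸ I) - 1 ⊗ₜ[A] (Ideal.Quotient.mk I b) with hu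
    have hus : u ∈ RingHom.ker s := by
      simp [RingHom.mem_ker, hu, map_sub, hs]
    rw [hJ] at hus
    have hmem : u * h.det ∈ Ideal.span (Set.range F) := by
      refine Submodule.span_induction
        (p := fun x _ => x * h.det ∈ Ideal.span (Set.range F)) ?_ ?_ ?_ ?_ hus
      · rintro _ ⟨k, rfl⟩
        rw [mul_comm]; exact hcramer k
      · simp
      · intro x y _ _ hx hy
        rw [add_mul]; exact Ideal.add_mem _ hx hy
      · intro a x _ hx
        rw [smul_mul_assoc]; exact Submodule.smul_mem _ _ hx
    have h0 : πbar (u * h.det) = 0 := hFker hmem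
    rw [map_mul] at h0
    have hΔ : πbar h.det = Δbar := hΔbar.symm
    have hπu : πbar u = (Ideal.Quotient.mk I b) ⊗ₜ[A] (1 : B ⧸ I)
        - (1 : B ⧸ I) ⊗ₜ[A] (Ideal.Quotient.mk I b) := by
      simp [hu, hπbar, map_sub, Ideal.Quotient.mkₐ_eq_mk]
    rw [hΔ, hπu, sub_mul, sub_eq_zero] at h0
    exact h0
  -- the lift map
  set L : (B ⧸ I) ⊗[A] (B ⧸ I) →ₗ[A] (B ⧸ I) :=
    TensorProduct.lift (((LinearMap.lsmul A (B ⧸ I)).comp lam).flip) with hL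
  have hL1 : L Δbar = 1 := by rw [hL, ← hT lam, hlam]
  have hLtmul : ∀ x y : B ⧸ I, L (x ⊗ₜ[A] y) = lam y • x := by
    intro x y; simp [hL]
  have alpha : ∀ (d : B ⧸ I) (w : (B ⧸ I) ⊗[A] (B ⧸ I)),
      L ((d ⊗ₜ[A] (1 : B ⧸ I)) * w) = d * L w := by
    intro d w
    induction w using TensorProduct.induction_on with
    | zero => simp
    | tmul x y =>
        rw [Algebra.TensorProduct.tmul_mul_tmul, one_mul, hLtmul, hLtmul, mul_smul_comm]
    | add x y hx hy => rw [mul_add, map_add, map_add, hx, hy, mul_add]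
  have beta : ∀ (z : B ⧸ I) (w : (B ⧸ I) ⊗[A] (B ⧸ I)),
      tatePhi A (B ⧸ I) lam w z = L (((1 : B ⧸ I) ⊗ₜ[A] z) * w) := by
    intro z w
    induction w using TensorProduct.induction_on with
    | zero => simp
    | tmul x y =>
        rw [tatePhi_tmul, Algebra.TensorProduct.tmul_mul_tmul, one_mul, hLtmul, mul_comm]
    | add x y hx hy => rw [map_add, LinearMap.add_apply, hx, hy, mul_add, map_add]
  have hΦid : tatePhi A (B ⧸ I) lam Δbar = LinearMap.id := by
    ext z
    rw [LinearMap.id_coe, id_eq, beta z Δbar, ← key z, alpha, hL1, mul_one]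
  have hmain : ∀ w : (B ⧸ I) ⊗[A] (B ⧸ I),
      LinearMap.trace A (B ⧸ I) ((LinearMap.mul A (B ⧸ I) c) ∘ₗ tatePhi A (B ⧸ I) lam w)
        = lam (LinearMap.mul' A (B ⧸ I) w * c) := by
    intro w
    induction w using TensorProduct.induction_on with
    | zero => simp
    | tmul x y =>
        have h1 : (LinearMap.mul A (B ⧸ I) c) ∘ₗ tatePhi A (B ⧸ I) lam (x ⊗ₜ[A] y)
            = dualTensorHom A (B ⧸ I) (B ⧸ I)
                ((lam ∘ₗ LinearMap.mul A (B ⧸ I) y) ⊗ₜ[A] (c * x)) := by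
          ext z
          simp only [LinearMap.comp_apply, tatePhi_tmul, dualTensorHom_apply,
            LinearMap.mul_apply', mul_smul_comm]
        rw [h1, LinearMap.trace_eq_contract_apply, contractLeft_apply]
        simp only [LinearMap.comp_apply, LinearMap.mul_apply', LinearMap.mul'_apply]
        congr 1
        ring
    | add x y hx hy =>
        rw [map_add, LinearMap.comp_add, map_add, hx, hy, map_add, add_mul, map_add]
  rw [← hmain Δbar, hΦid, LinearMap.comp_id]
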